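/- Let X be a compact metric space, f : X → X a continuous map, μ an f-invariant Borel probability measure on X, and L : C(X;ℝ) → C(X;ℝ) a linear operator such that: (i) ∫ L(g) dμ = ∫ g dμ for all g ∈ C(X;ℝ); (ii) L((g∘f)·h) = g·L(h) for all g, h ∈ C(X;ℝ); and (iii) for every g ∈ C(X;ℝ), Lⁿ(g) converges uniformly on X to the constant ∫ g dμ. Then μ is K-mixing: for every g ∈ L²(μ) with ∫ g dμ = 0, one has sup{ |∫ g·(l∘fⁿ) dμ| : l ∈ L²(μ), ‖l‖_{L²(μ)} ≤ 1 } → 0 as n → ∞. -/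

import Mathlib

open MeasureTheory Filter

section Aux
variable {X : Type*} [MeasurableSpace X] {μ : Measure X}

lemma cs_aux (a b : X → ℝ) (ha : MemLp a 2 μ) (hb : MemLp b 2 μ) :
    |∫ x, a x * b x ∂μ| ≤ (eLpNorm a 2 μ).toReal * (eLpNorm b 2 μ).toReal := by
  set A := ha.toLp a
  set B := hb.toLp b
  have h1 : ∫ x, a x * b x ∂μ = ∫ x, A x * B x ∂μ := by
    refine integral_congr_ae ?_
    filter_upwards [ha.coeFn_toLp, hb.coeFn_toLp] with x h1 h2
    rw [h1, h2]
  have h2 : (inner ℝ A B : ℝ) = ∫ x, A x * B x ∂μ := by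
    rw [MeasureTheory.L2.inner_def]
    simp [RCLike.inner_apply, mul_comm]
  rw [h1, ← h2]
  calc |(inner ℝ A B : ℝ)| ≤ ‖A‖ * ‖B‖ := abs_real_inner_le_norm A B
    _ = (eLpNorm a 2 μ).toReal * (eLpNorm b 2 μ).toReal := by
        rw [Lp.norm_toLp, Lp.norm_toLp]

lemma mul_int_aux (a b : X → ℝ) (ha : MemLp a 2 μ) (hb : MemLp b 2 μ) :
    Integrable (fun x => a x * b x) μ := by
  have h := MeasureTheory.L2.integrable_inner (𝕜 := ℝ) (ha.toLp a) (hb.toLp b)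
  refine h.congr ?_
  filter_upwards [ha.coeFn_toLp, hb.coeFn_toLp] with x h1 h2
  simp [RCLike.inner_apply, h1, h2, mul_comm]

end Aux

/-- second part of Proposition 4.5 of the paper, abstract form. Under
the same hypotheses as Statement 13, `μ` is K-mixing: for every `g ∈ L²(μ)` with
`∫ g dμ = 0`, the correlations `∫ g (l∘fⁿ) dμ` tend to `0` uniformly over `l` in the unit
ball of `L²(μ)`. -/
theorem stmt_14 {X : Type*} [MetricSpace X] [CompactSpace X]
    [MeasurableSpace X] [BorelSpace X]
    (f : X → X) (hf : Continuous f)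
    (μ : Measure X) [IsProbabilityMeasure μ] (hinv : μ.map f = μ)
    (L : C(X, ℝ) →ₗ[ℝ] C(X, ℝ))
    (hint : ∀ g : C(X, ℝ), ∫ x, (L g) x ∂μ = ∫ x, g x ∂μ)
    (hhom : ∀ g h : C(X, ℝ), L ((g.comp ⟨f, hf⟩) * h) = g * L h)
    (hconv : ∀ g : C(X, ℝ),
      TendstoUniformly (fun n : ℕ => fun x : X => ((L ^ n) g) x)
        (fun _ : X => ∫ x, g x ∂μ) atTop) :
    ∀ g : X → ℝ, MemLp g 2 μ → ∫ x, g x ∂μ = 0 →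
      ∀ ε : ℝ, 0 < ε → ∃ N : ℕ, ∀ n : ℕ, N ≤ n →
        ∀ l : X → ℝ, MemLp l 2 μ → eLpNorm l 2 μ ≤ 1 →
          |∫ x, g x * l (f^[n] x) ∂μ| ≤ ε := by
  have hmp : ∀ n : ℕ, MeasurePreserving (f^[n]) μ μ :=
    fun n => (MeasurePreserving.mk hf.measurable hinv).iterate n
  -- continuous maps are in L²
  have hcm : ∀ h : C(X, ℝ), MemLp (⇑h) 2 μ := fun h =>
    MemLp.of_bound h.continuous.aestronglyMeasurable ‖h‖
      (Filter.Eventually.of_forall h.norm_coe_le_norm)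
  -- one-step duality for continuous functions
  have hstep : ∀ l g' : C(X, ℝ), ∫ x, l (f x) * g' x ∂μ = ∫ x, l x * (L g') x ∂μ := by
    intro l g'
    have h1 := hint ((l.comp ⟨f, hf⟩) * g')
    rw [hhom l g'] at h1
    simpa [ContinuousMap.mul_apply, ContinuousMap.comp_apply] using h1.symm
  -- iterated duality for continuous functions
  have hiter : ∀ (n : ℕ) (g' l : C(X, ℝ)),
      ∫ x, l (f^[n] x) * g' x ∂μ = ∫ x, l x * ((L ^ n) g') x ∂μ := by
    intro n
    induction n with
    | zero => intro g' l; simp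
    | succ n ih =>
      intro g' l
      have hln : Continuous (f^[n]) := hf.iterate n
      have e1 : ∫ x, l (f^[n+1] x) * g' x ∂μ
          = ∫ x, (l.comp ⟨f^[n], hln⟩) (f x) * g' x ∂μ := by
        refine integral_congr_ae (Filter.Eventually.of_forall fun x => ?_)
        simp [Function.iterate_succ_apply, ContinuousMap.comp_apply]
      rw [e1, hstep (l.comp ⟨f^[n], hln⟩) g']
      have e2 : ∫ x, (l.comp ⟨f^[n], hln⟩) x * (L g') x ∂μ
          = ∫ x, l (f^[n] x) * (L g') x ∂μ := rfl
      rw [e2, ih (L g') l]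
      have hp : (L ^ (n+1)) g' = (L ^ n) (L g') := by rw [pow_succ]; rfl
      rw [hp]
  -- duality extended to L² test functions
  have hext : ∀ (n : ℕ) (g' : C(X, ℝ)) (l : X → ℝ), MemLp l 2 μ →
      ∫ x, l (f^[n] x) * g' x ∂μ = ∫ x, l x * ((L ^ n) g') x ∂μ := by
    intro n g' l hl
    set Gn : C(X, ℝ) := (L ^ n) g' with hGn
    set M : ℝ := (eLpNorm (⇑g') 2 μ).toReal + (eLpNorm (⇑Gn) 2 μ).toReal with hM
    have hM0 : 0 ≤ M := add_nonneg ENNReal.toReal_nonneg ENNReal.toReal_nonneg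
    set D : ℝ := ∫ x, l (f^[n] x) * g' x ∂μ - ∫ x, l x * Gn x ∂μ with hD
    have key : ∀ δ : ℝ, 0 < δ → |D| ≤ δ := by
      intro δ hδ
      have hM1 : (0:ℝ) < M + 1 := by linarith
      set δ' : ℝ := δ / (M + 1) with hδ'def
      have hδ' : 0 < δ' := div_pos hδ hM1
      obtain ⟨l', hl'1, hl'2⟩ := hl.exists_boundedContinuous_eLpNorm_sub_le
        (by norm_num) (ENNReal.ofReal_pos.mpr hδ').ne'
      have hsub : MemLp (l - ⇑l') 2 μ := hl.sub hl'2
      have hsubn : MemLp (fun x => (l - ⇑l') (f^[n] x)) 2 μ :=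
        hsub.comp_measurePreserving (hmp n)
      have hln2 : MemLp (⇑l' ∘ f^[n]) 2 μ := hl'2.comp_measurePreserving (hmp n)
      have hlln : MemLp (fun x => l (f^[n] x)) 2 μ := hl.comp_measurePreserving (hmp n)
      -- split the difference
      have int1 : Integrable (fun x => l (f^[n] x) * g' x) μ :=
        mul_int_aux _ _ hlln (hcm g')
      have int2 : Integrable (fun x => l' (f^[n] x) * g' x) μ :=
        mul_int_aux _ _ hln2 (hcm g')
      have int3 : Integrable (fun x => l x * Gn x) μ := mul_int_aux _ _ hl (hcm Gn)
      have int4 : Integrable (fun x => l' x * Gn x) μ :=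
        mul_int_aux _ _ hl'2 (hcm Gn)
      have emid : ∫ x, l' (f^[n] x) * g' x ∂μ = ∫ x, l' x * Gn x ∂μ :=
        hiter n g' l'.toContinuousMap
      have e1 : ∫ x, l (f^[n] x) * g' x ∂μ - ∫ x, l' (f^[n] x) * g' x ∂μ
          = ∫ x, (l - ⇑l') (f^[n] x) * g' x ∂μ := by
        rw [← integral_sub int1 int2]
        refine integral_congr_ae (Filter.Eventually.of_forall fun x => ?_)
        simp [Pi.sub_apply]; ring
      have e2 : ∫ x, l x * Gn x ∂μ - ∫ x, l' x * Gn x ∂μ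
          = ∫ x, (l - ⇑l') x * Gn x ∂μ := by
        rw [← integral_sub int3 int4]
        refine integral_congr_ae (Filter.Eventually.of_forall fun x => ?_)
        simp [Pi.sub_apply]; ring
      have hDsplit : D = (∫ x, (l - ⇑l') (f^[n] x) * g' x ∂μ)
          - ∫ x, (l - ⇑l') x * Gn x ∂μ := by
        rw [hD, ← e1, ← e2, emid]; ring
      -- norms
      have hsn : eLpNorm (fun x => (l - ⇑l') (f^[n] x)) 2 μ = eLpNorm (l - ⇑l') 2 μ :=
        eLpNorm_comp_measurePreserving hsub.aestronglyMeasurable (hmp n)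
      have hδ'' : (eLpNorm (l - ⇑l') 2 μ).toReal ≤ δ' :=
        ENNReal.toReal_le_of_le_ofReal hδ'.le hl'1
      have b1 : |∫ x, (l - ⇑l') (f^[n] x) * g' x ∂μ|
          ≤ δ' * (eLpNorm (⇑g') 2 μ).toReal := by
        refine (cs_aux _ _ hsubn (hcm g')).trans ?_
        rw [hsn]
        exact mul_le_mul_of_nonneg_right hδ'' ENNReal.toReal_nonneg
      have b2 : |∫ x, (l - ⇑l') x * Gn x ∂μ| ≤ δ' * (eLpNorm (⇑Gn) 2 μ).toReal := by
        refine (cs_aux _ _ hsub (hcm Gn)).trans ?_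
        exact mul_le_mul_of_nonneg_right hδ'' ENNReal.toReal_nonneg
      have : |D| ≤ δ' * M := by
        rw [hDsplit, hM]
        calc |_ - _| ≤ _ := abs_sub _ _
          _ ≤ δ' * (eLpNorm (⇑g') 2 μ).toReal + δ' * (eLpNorm (⇑Gn) 2 μ).toReal :=
            add_le_add b1 b2
          _ = δ' * ((eLpNorm (⇑g') 2 μ).toReal + (eLpNorm (⇑Gn) 2 μ).toReal) := by ring
      refine this.trans ?_
      rw [hδ'def]
      rw [div_mul_eq_mul_div, div_le_iff₀ hM1]
      nlinarith
    have hD0 : D = 0 := by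
      by_contra h
      have h1 : 0 < |D| := abs_pos.mpr h
      have := key (|D| / 2) (by linarith)
      linarith
    linarith [hD0.symm, hD]
  -- main argument
  intro g hg hg0 ε hε
  set δ : ℝ := ε / 3 with hδdef
  have hδ : 0 < δ := by rw [hδdef]; linarith
  obtain ⟨g₀, hg01, hg02⟩ := hg.exists_boundedContinuous_eLpNorm_sub_le
    (by norm_num) (ENNReal.ofReal_pos.mpr hδ).ne'
  set G : C(X, ℝ) := g₀.toContinuousMap with hGdef
  set c : ℝ := ∫ x, G x ∂μ with hcdef
  have hsubm : MemLp (g - ⇑g₀) 2 μ := hg.sub hg02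
  have hone : MemLp (fun _ : X => (1:ℝ)) 2 μ := memLp_const 1
  have honeN : (eLpNorm (fun _ : X => (1:ℝ)) 2 μ).toReal = 1 := by
    rw [eLpNorm_const (1:ℝ) (by norm_num) (IsProbabilityMeasure.ne_zero μ)]
    simp
  have hgsd : (eLpNorm (g - ⇑g₀) 2 μ).toReal ≤ δ :=
    ENNReal.toReal_le_of_le_ofReal hδ.le hg01
  have hcb : |c| ≤ δ := by
    have hgi : Integrable g μ := hg.integrable (by norm_num)
    have hGi : Integrable ⇑G μ := (hcm G).integrable (by norm_num)
    have e : ∫ x, (⇑G - g) x * (1:ℝ) ∂μ = c := by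
      simp only [Pi.sub_apply, mul_one]
      rw [integral_sub hGi hgi, hg0, sub_zero]
    have h := cs_aux (⇑G - g) (fun _ => 1) ((hcm G).sub hg) hone
    rw [e, honeN, mul_one, eLpNorm_sub_comm] at h
    exact h.trans hgsd
  have hcu := hconv G
  rw [Metric.tendstoUniformly_iff] at hcu
  obtain ⟨N, hN⟩ := Filter.eventually_atTop.mp (hcu δ hδ)
  refine ⟨N, fun n hn l hl hl1 => ?_⟩
  set Gn : C(X, ℝ) := (L ^ n) G with hGndef
  have hGnb : ∀ x, ‖Gn x - c‖ ≤ δ := by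
    intro x
    have h := hN n hn x
    rw [Real.dist_eq, abs_sub_comm] at h
    exact h.le
  have hGnc : MemLp (fun x => Gn x - c) 2 μ := (hcm Gn).sub (memLp_const c)
  have hGncN : (eLpNorm (fun x => Gn x - c) 2 μ).toReal ≤ δ := by
    have h := eLpNorm_le_of_ae_bound (μ := μ) (p := 2) (f := fun x => Gn x - c)
      (C := δ) (Filter.Eventually.of_forall hGnb)
    rw [measure_univ, ENNReal.one_rpow, one_mul] at h
    exact ENNReal.toReal_le_of_le_ofReal hδ.le h
  have hlin : MemLp (fun x => l (f^[n] x)) 2 μ := hl.comp_measurePreserving (hmp n)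
  have hl2r : (eLpNorm l 2 μ).toReal ≤ 1 := by
    refine ENNReal.toReal_le_of_le_ofReal one_pos.le ?_
    simpa using hl1
  have hlnr : (eLpNorm (fun x => l (f^[n] x)) 2 μ).toReal ≤ 1 := by
    have h : eLpNorm (fun x => l (f^[n] x)) 2 μ = eLpNorm l 2 μ :=
      eLpNorm_comp_measurePreserving hl.aestronglyMeasurable (hmp n)
    rw [h]
    exact hl2r
  have intB : Integrable (fun x => G x * l (f^[n] x)) μ := mul_int_aux _ _ (hcm G) hlin
  have e1 : ∫ x, g x * l (f^[n] x) ∂μ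
      = (∫ x, (g - ⇑g₀) x * l (f^[n] x) ∂μ) + ∫ x, G x * l (f^[n] x) ∂μ := by
    rw [← integral_add (mul_int_aux _ _ hsubm hlin) intB]
    refine integral_congr_ae (Filter.Eventually.of_forall fun x => ?_)
    simp only [Pi.sub_apply, hGdef, BoundedContinuousFunction.coe_toContinuousMap]
    ring
  have e2 : ∫ x, G x * l (f^[n] x) ∂μ = ∫ x, l (f^[n] x) * G x ∂μ :=
    integral_congr_ae (Filter.Eventually.of_forall fun x => mul_comm _ _)
  have e3 : ∫ x, l (f^[n] x) * G x ∂μ = ∫ x, l x * Gn x ∂μ := hext n G l hl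
  have e4 : ∫ x, l x * Gn x ∂μ
      = (∫ x, l x * (Gn x - c) ∂μ) + c * ∫ x, l x ∂μ := by
    rw [← MeasureTheory.integral_const_mul,
      ← integral_add (mul_int_aux _ _ hl hGnc) ((hl.integrable (by norm_num)).const_mul c)]
    refine integral_congr_ae (Filter.Eventually.of_forall fun x => ?_)
    ring
  have b1 : |∫ x, (g - ⇑g₀) x * l (f^[n] x) ∂μ| ≤ δ * 1 :=
    (cs_aux _ _ hsubm hlin).trans
      (mul_le_mul hgsd hlnr ENNReal.toReal_nonneg hδ.le)
  have b2 : |∫ x, l x * (Gn x - c) ∂μ| ≤ 1 * δ :=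
    (cs_aux _ _ hl hGnc).trans
      (mul_le_mul hl2r hGncN ENNReal.toReal_nonneg zero_le_one)
  have b3 : |c * ∫ x, l x ∂μ| ≤ δ * 1 := by
    rw [abs_mul]
    have hil : |∫ x, l x ∂μ| ≤ 1 := by
      have h := cs_aux l (fun _ => 1) hl hone
      rw [honeN, mul_one] at h
      simpa using h.trans hl2r
    exact mul_le_mul hcb hil (abs_nonneg _) hδ.le
  have etot : ∫ x, g x * l (f^[n] x) ∂μ
      = (∫ x, (g - ⇑g₀) x * l (f^[n] x) ∂μ)
        + ((∫ x, l x * (Gn x - c) ∂μ) + c * ∫ x, l x ∂μ) := by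
    rw [e1, e2, e3, e4]
  rw [etot]
  have habs : |(∫ x, (g - ⇑g₀) x * l (f^[n] x) ∂μ)
        + ((∫ x, l x * (Gn x - c) ∂μ) + c * ∫ x, l x ∂μ)|
      ≤ |∫ x, (g - ⇑g₀) x * l (f^[n] x) ∂μ|
        + (|∫ x, l x * (Gn x - c) ∂μ| + |c * ∫ x, l x ∂μ|) :=
    (abs_add_le _ _).trans (add_le_add le_rfl (abs_add_le _ _))
  have : |(∫ x, (g - ⇑g₀) x * l (f^[n] x) ∂μ)
        + ((∫ x, l x * (Gn x - c) ∂μ) + c * ∫ x, l x ∂μ)|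
      ≤ δ * 1 + (1 * δ + δ * 1) := habs.trans (add_le_add b1 (add_le_add b2 b3))
  refine this.trans ?_
  rw [hδdef]
  ring_nf
  linarith
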